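/- (Derivative of the metric tensor, Claim 1) Let ρ(t)=ρ+tσ₁ with ρ strictly positive in the probability simplex and σ₁ a zero-sum vector, and g(μ)=L(μ)^†+u₀u₀ᵀ, where L is linear in its argument. Then for t near 0, d/dt g(ρ+tσ₁) = −g(ρ+tσ₁) L(σ₁) g(ρ+tσ₁). Consequently, for zero-sum vectors σ₂,σ₃: d/dt|_{t=0} σ₂ᵀ L(ρ+tσ₁)^† σ₃ = −σ₂ᵀ L(ρ)^† L(σ₁) L(ρ)^† σ₃. -/

import Mathlib

open Matrix

attribute [local instance] Matrix.normedAddCommGroup Matrix.normedSpace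

/-- Discrete gradient matrix `D ∈ ℝ^{|E|×n}` with entries `±√ω_{ij}`. -/
noncomputable def gradMat {n : ℕ} {E : Type} (sE tE : E → Fin n) (w : E → ℝ) :
    Matrix E (Fin n) ℝ :=
  fun e k => if k = sE e then Real.sqrt (w e) else if k = tE e then -Real.sqrt (w e) else 0

/-- Weighted graph Laplacian `L(a) = Dᵀ Θ(a) D` with `Θ(a)` diagonal with entries
`(a_i + a_j)/2` on edges. -/
noncomputable def Lw {n : ℕ} {E : Type} [Fintype E] [DecidableEq E] (sE tE : E → Fin n) (w : E → ℝ)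
    (a : Fin n → ℝ) : Matrix (Fin n) (Fin n) ℝ :=
  (gradMat sE tE w)ᵀ * Matrix.diagonal (fun e => (a (sE e) + a (tE e)) / 2) * gradMat sE tE w

/-- `B` is the Moore–Penrose pseudoinverse of `A` (the four Penrose conditions). -/
def IsPInv {n : ℕ} (A B : Matrix (Fin n) (Fin n) ℝ) : Prop :=
  A * B * A = A ∧ B * A * B = B ∧ (A * B)ᵀ = A * B ∧ (B * A)ᵀ = B * A

/-- Vertex-wise circle product of the gradient fields of two potentials:
`(∇_GΦ ∘ ∇_GΨ)_i = (1/2)·Σ_{j ∈ N(i)} ω_{ij}(Φ_i − Φ_j)(Ψ_i − Ψ_j)`. -/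
noncomputable def circ {n : ℕ} {E : Type} [Fintype E] (sE tE : E → Fin n) (w : E → ℝ)
    (Φ Ψ : Fin n → ℝ) : Fin n → ℝ :=
  fun i => (1 / 2) *
    ∑ e : E, (if sE e = i ∨ tE e = i then
      w e * (Φ (sE e) - Φ (tE e)) * (Ψ (sE e) - Ψ (tE e)) else 0)

/-- The normalized all-ones vector `u₀ = (1/√n)(1,…,1)ᵀ`. -/
noncomputable def onesVec (n : ℕ) : Fin n → ℝ := fun _ => 1 / Real.sqrt n

/-- The linear functional `A ↦ σ₂ᵀ A σ₃` as a continuous linear map. -/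
noncomputable def dotCLM {n : ℕ} (σ₂ σ₃ : Fin n → ℝ) :
    Matrix (Fin n) (Fin n) ℝ →L[ℝ] ℝ :=
  LinearMap.toContinuousLinearMap
    { toFun := fun A => σ₂ ⬝ᵥ (A *ᵥ σ₃)
      map_add' := fun A B => by simp [Matrix.add_mulVec]
      map_smul' := fun c A => by simp [Matrix.smul_mulVec] }

/-- Claim 1, derivative of the metric tensor: if `G t` is the inverse of
`L(ρ+tσ₁) + u₀u₀ᵀ` for `t` near `0` (so `G t = g(ρ+tσ₁)`), then
`d/dt G = −G L(σ₁) G`, and consequently for zero-sum `σ₂, σ₃`,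
`d/dt|₀ σ₂ᵀ L(ρ+tσ₁)^† σ₃ = −σ₂ᵀ L(ρ)^† L(σ₁) L(ρ)^† σ₃`. -/
theorem metric_tensor_derivative
    {n : ℕ} {E : Type} [Fintype E] [DecidableEq E]
    (sE tE : E → Fin n) (w : E → ℝ)
    (hw : ∀ e, 0 < w e)
    (hconn : ∀ Φ : Fin n → ℝ, (∀ e, Φ (sE e) = Φ (tE e)) → ∀ i j, Φ i = Φ j)
    (ρ : Fin n → ℝ) (hρ : ∀ i, 0 < ρ i) (hsum : ∑ i, ρ i = 1)
    (σ₁ σ₂ σ₃ : Fin n → ℝ)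
    (h1 : ∑ i, σ₁ i = 0) (h2 : ∑ i, σ₂ i = 0) (h3 : ∑ i, σ₃ i = 0)
    (Ldag : Matrix (Fin n) (Fin n) ℝ) (hpinv : IsPInv (Lw sE tE w ρ) Ldag)
    (hker : ∀ Φ : Fin n → ℝ, Lw sE tE w ρ *ᵥ Φ = 0 ↔ ∃ c : ℝ, ∀ i, Φ i = c)
    (G : ℝ → Matrix (Fin n) (Fin n) ℝ) (ε : ℝ) (hε : 0 < ε)
    (hG : ∀ t : ℝ, |t| < ε →
      G t * (Lw sE tE w (ρ + t • σ₁) + vecMulVec (onesVec n) (onesVec n)) = 1 ∧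
      (Lw sE tE w (ρ + t • σ₁) + vecMulVec (onesVec n) (onesVec n)) * G t = 1)
    (hG0 : G 0 = Ldag + vecMulVec (onesVec n) (onesVec n)) :
    (∀ t : ℝ, |t| < ε → HasDerivAt G (-(G t * Lw sE tE w σ₁ * G t)) t) ∧
    HasDerivAt (fun t => σ₂ ⬝ᵥ (G t *ᵥ σ₃))
      (-(σ₂ ⬝ᵥ ((Ldag * Lw sE tE w σ₁ * Ldag) *ᵥ σ₃))) 0 := by
  set C := Lw sE tE w σ₁ with hC
  set P := vecMulVec (onesVec n) (onesVec n) with hP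
  set N : ℝ → Matrix (Fin n) (Fin n) ℝ :=
    fun t => Lw sE tE w (ρ + t • σ₁) + P with hN
  -- linearity of Lw
  have lin : ∀ t : ℝ, Lw sE tE w (ρ + t • σ₁) = Lw sE tE w ρ + t • C := by
    intro t
    have hdiag : (Matrix.diagonal fun e => ((ρ + t • σ₁) (sE e) + (ρ + t • σ₁) (tE e)) / 2)
        = Matrix.diagonal (fun e => (ρ (sE e) + ρ (tE e)) / 2)
          + t • Matrix.diagonal (fun e => (σ₁ (sE e) + σ₁ (tE e)) / 2) := by
      ext i j
      rcases eq_or_ne i j with rfl | h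
      · simp only [Matrix.add_apply, Matrix.smul_apply, Matrix.diagonal_apply_eq,
          Pi.add_apply, Pi.smul_apply, smul_eq_mul]
        ring
      · simp [Matrix.diagonal_apply_ne _ h]
    simp only [Lw, hC, hdiag, Matrix.mul_add, Matrix.add_mul, Matrix.mul_smul, Matrix.smul_mul]
  have hNlin : ∀ t : ℝ, N t = (Lw sE tE w ρ + P) + t • C := by
    intro t; rw [hN]; simp only [lin t]; abel
  have hNsub : ∀ s t : ℝ, N t - N s = (t - s) • C := by
    intro s t; rw [hNlin t, hNlin s, sub_smul]; abel
  have hNcont : Continuous N := by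
    have : Continuous fun t : ℝ => (Lw sE tE w ρ + P) + t • C :=
      continuous_const.add (continuous_id.smul continuous_const)
    exact this.congr fun t => (hNlin t).symm
  -- the key algebraic identity
  have key : ∀ s t : ℝ, |s| < ε → |t| < ε →
      G s - G t = (t - s) • (G s * C * G t) := by
    intro s t hs ht
    have e1 : G s * N s = 1 := (hG s hs).1
    have e2 : N t * G t = 1 := (hG t ht).2
    calc G s - G t = G s * (N t * G t) - (G s * N s) * G t := by rw [e1, e2, mul_one, one_mul]
      _ = (G s * (N t - N s)) * G t := by noncomm_ring
      _ = (G s * ((t - s) • C)) * G t := by rw [hNsub]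
      _ = (t - s) • (G s * C * G t) := by
          rw [Matrix.mul_smul, Matrix.smul_mul]
  -- continuity of G on the ball
  have hball : ∀ t : ℝ, |t| < ε → {s : ℝ | |s| < ε} ∈ nhds t := by
    intro t ht
    exact (isOpen_lt continuous_abs continuous_const).mem_nhds ht
  have hGcont : ∀ t : ℝ, |t| < ε → ContinuousAt G t := by
    intro t ht
    have hinv : ∀ s : ℝ, |s| < ε → G s = (N s)⁻¹ := fun s hs =>
      (Matrix.inv_eq_left_inv (hG s hs).1).symm
    have hdet : IsUnit (N t).det := Matrix.isUnit_det_of_right_inverse (hG t ht).2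
    have hri : ContinuousAt Ring.inverse (N t).det :=
      hdet.unit_spec ▸ NormedRing.inverse_continuousAt hdet.unit
    have h1 : ContinuousAt (fun s => (N s)⁻¹) t :=
      (continuousAt_matrix_inv (N t) hri).comp hNcont.continuousAt
    refine h1.congr ?_
    exact Filter.eventually_of_mem (hball t ht) fun s hs => (hinv s hs).symm
  have main : ∀ t : ℝ, |t| < ε → HasDerivAt G (-(G t * C * G t)) t := by
    intro t ht
    refine hasDerivAt_iff_tendsto_slope.mpr ?_
    have hev : ∀ᶠ s in nhdsWithin t {t}ᶜ, -(G s * C * G t) = slope G t s := by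
      have hmem : {s : ℝ | |s| < ε} ∈ nhdsWithin t {t}ᶜ :=
        nhdsWithin_le_nhds (hball t ht)
      filter_upwards [hmem, self_mem_nhdsWithin] with s hs hne
      have hst : s - t ≠ 0 := sub_ne_zero.mpr hne
      rw [slope_def_module, key s t hs ht, smul_smul]
      have : (s - t)⁻¹ * (t - s) = -1 := by
        field_simp
        ring
      rw [this, neg_one_smul]
    refine Filter.Tendsto.congr' hev ?_
    have hc : ContinuousAt (fun s => -(G s * C * G t)) t :=
      (((hGcont t ht).mul continuousAt_const).mul continuousAt_const).neg
    exact hc.tendsto.mono_left nhdsWithin_le_nhds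
  refine ⟨main, ?_⟩
  -- part 2
  have h0 : |(0:ℝ)| < ε := by simpa using hε
  have hd0 : HasDerivAt G (-(G 0 * C * G 0)) 0 := main 0 h0
  have hcomp : HasDerivAt (fun t => (dotCLM σ₂ σ₃) (G t))
      ((dotCLM σ₂ σ₃) (-(G 0 * C * G 0))) 0 :=
    ((dotCLM σ₂ σ₃).hasFDerivAt).comp_hasDerivAt 0 hd0
  have happ : ∀ A : Matrix (Fin n) (Fin n) ℝ, (dotCLM σ₂ σ₃) A = σ₂ ⬝ᵥ (A *ᵥ σ₃) :=
    fun A => rfl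
  have hu3 : ∑ j, onesVec n j * σ₃ j = 0 := by
    simp only [onesVec]
    rw [← Finset.mul_sum, h3, mul_zero]
  have hu2 : ∑ i, σ₂ i * onesVec n i = 0 := by
    simp only [onesVec]
    rw [← Finset.sum_mul, h2, zero_mul]
  have hP3 : P *ᵥ σ₃ = 0 := by
    funext i
    simp only [hP, Matrix.mulVec, dotProduct, Matrix.vecMulVec_apply, Pi.zero_apply]
    simp_rw [mul_assoc]
    rw [← Finset.mul_sum, hu3, mul_zero]
  have h2P : σ₂ ᵥ* P = 0 := by
    funext j
    simp only [hP, Matrix.vecMul, dotProduct, Matrix.vecMulVec_apply, Pi.zero_apply]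
    simp_rw [← mul_assoc]
    rw [← Finset.sum_mul, hu2, zero_mul]
  have hsand : σ₂ ⬝ᵥ ((G 0 * C * G 0) *ᵥ σ₃) = σ₂ ⬝ᵥ ((Ldag * C * Ldag) *ᵥ σ₃) := by
    rw [hG0]
    have expand : (Ldag + P) * C * (Ldag + P)
        = Ldag * C * Ldag + Ldag * C * P + (P * C * Ldag + P * C * P) := by
      noncomm_ring
    rw [expand]
    have t2 : (Ldag * C * P) *ᵥ σ₃ = 0 := by
      rw [← Matrix.mulVec_mulVec, hP3, Matrix.mulVec_zero]
    have t4 : (P * C * P) *ᵥ σ₃ = 0 := by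
      rw [← Matrix.mulVec_mulVec, hP3, Matrix.mulVec_zero]
    have t3 : σ₂ ⬝ᵥ ((P * C * Ldag) *ᵥ σ₃) = 0 := by
      rw [Matrix.dotProduct_mulVec, ← Matrix.vecMul_vecMul, ← Matrix.vecMul_vecMul, h2P,
        Matrix.zero_vecMul, Matrix.zero_vecMul, zero_dotProduct]
    simp only [Matrix.add_mulVec, dotProduct_add, t2, t4, t3, dotProduct_zero,
      add_zero, zero_add]
  have hval : (dotCLM σ₂ σ₃) (-(G 0 * C * G 0))
      = -(σ₂ ⬝ᵥ ((Ldag * C * Ldag) *ᵥ σ₃)) := by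
    rw [map_neg, happ, hsand]
  rw [hval] at hcomp
  exact hcomp
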